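/- Let T be a locally compact, separable and metrisable topological space, let d ∈ M^T, and let d' be a metric on the set T which is continuous as a function on T² (with respect to the original topology) and satisfies ρ_T(d, d') < 1. Then d' is a proper metric compatible with the topology of T, i.e. d' ∈ M^T. In particular, writing M* for the set of all metrics on T that are continuous as functions on T², one has ρ_T(d, d') ≥ 1 whenever d ∈ M^T and d' ∈ M* \ M^T. -/
import Mathlib


/-- `d` is a metric (as a raw function). -/
def IsMetric {T : Type*} (d : T → T → ℝ) : Prop :=
  (∀ x y, d x y = 0 ↔ x = y) ∧ (∀ x y, d x y = d y x) ∧ ∀ x y z, d x z ≤ d x y + d y z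

/-- `d` induces the topology of `T`. -/
def Compatible (T : Type*) [TopologicalSpace T] (d : T → T → ℝ) : Prop :=
  ∀ s : Set T, IsOpen s ↔ ∀ x ∈ s, ∃ ε > 0, ∀ y, d x y < ε → y ∈ s

/-- `d` is a proper metric on `T` compatible with its topology, i.e. `d ∈ M^T`. -/
def ProperCompatMetric (T : Type*) [TopologicalSpace T] (d : T → T → ℝ) : Prop :=
  IsMetric d ∧ Compatible T d ∧ ∀ (x : T) (r : ℝ), IsCompact {y : T | d x y ≤ r}

/-- The uniform (truncated) distance `ρ_T` on functions on `T²`. -/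
noncomputable def rhoT (T : Type*) (f g : T → T → ℝ) : ℝ :=
  ⨆ p : T × T, min 1 |f p.1 p.2 - g p.1 p.2|

/-- `f` is `K`-Lipschitz with respect to the raw metric `d`. -/
def LipWith {M : Type*} (d : M → M → ℝ) (K : ℝ) (f : M → ℝ) : Prop :=
  ∀ x y, |f x - f y| ≤ K * d x y

/-- If `d ∈ M^T` and `d'` is a metric on `T`, continuous as a function on `T²`,
with `ρ_T(d, d') < 1`, then `d' ∈ M^T`.  In particular, `ρ_T(e, e') ≥ 1` whenever `e ∈ M^T` and
`e'` is a continuous metric on `T²` not belonging to `M^T`. -/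
lemma key {T : Type*} [TopologicalSpace T] [TopologicalSpace.MetrizableSpace T]
    (d : T → T → ℝ) (hd : ProperCompatMetric T d)
    (d' : T → T → ℝ) (hd' : IsMetric d')
    (hcont : Continuous fun p : T × T => d' p.1 p.2)
    (hlt : rhoT T d d' < 1) : ProperCompatMetric T d' := by
  -- pointwise bound
  have hB : BddAbove (Set.range fun p : T × T => min 1 |d p.1 p.2 - d' p.1 p.2|) := by
    refine ⟨1, ?_⟩
    rintro r ⟨p, rfl⟩
    exact min_le_left _ _
  have hb : ∀ x y : T, |d x y - d' x y| < 1 := by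
    intro x y
    have hle : min 1 |d x y - d' x y| ≤ rhoT T d d' := le_ciSup hB (x, y)
    by_contra h
    push_neg at h
    rw [min_eq_left h] at hle
    linarith
  have hnn : ∀ x y, 0 ≤ d' x y := by
    intro x y
    have h1 := hd'.2.2 x y x
    have h2 := (hd'.1 x x).2 rfl
    have h3 := hd'.2.1 y x
    nlinarith
  have hcx : ∀ x : T, Continuous fun y => d' x y := fun x =>
    hcont.comp (continuous_const.prodMk continuous_id)
  refine ⟨hd', ?_, ?_⟩
  · -- compatibility
    intro s
    constructor
    · intro hs x hx
      by_contra h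
      push_neg at h
      have hy : ∀ n : ℕ, ∃ y, d' x y < 1 / (n + 1) ∧ y ∉ s := by
        intro n
        obtain ⟨y, hy1, hy2⟩ := h (1 / (n + 1)) (by positivity)
        exact ⟨y, hy1, hy2⟩
      choose y hy1 hy2 using hy
      have hyK : ∀ n, y n ∈ {z : T | d x z ≤ 2} := by
        intro n
        have h1 := hb x (y n)
        have h2 := hy1 n
        have h3 : (1 : ℝ) / (n + 1) ≤ 1 := by
          rw [div_le_one (by positivity)]; linarith [Nat.cast_nonneg (α := ℝ) n]
        simp only [Set.mem_setOf_eq]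
        have := abs_lt.1 h1
        linarith [this.1, this.2]
      obtain ⟨a, ha, φ, hφ, htends⟩ := (hd.2.2 x 2).tendsto_subseq hyK
      have h0 : Filter.Tendsto (fun k => d' x (y (φ k))) Filter.atTop (nhds (d' x a)) :=
        ((hcx x).tendsto a).comp htends
      have h0' : Filter.Tendsto (fun k => d' x (y (φ k))) Filter.atTop (nhds 0) := by
        apply squeeze_zero (fun k => hnn x _) (fun k => (hy1 (φ k)).le.trans ?_)
          tendsto_one_div_add_atTop_nhds_zero_nat
        have hk : k ≤ φ k := hφ.le_apply
        have : (k : ℝ) + 1 ≤ (φ k : ℝ) + 1 := by exact_mod_cast Nat.succ_le_succ hk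
        exact one_div_le_one_div_of_le (by positivity) this
      have hda : d' x a = 0 := tendsto_nhds_unique h0 h0'
      have hax : a = x := ((hd'.1 x a).1 hda).symm
      have has : a ∈ sᶜ :=
        hs.isClosed_compl.mem_of_tendsto htends (Filter.Eventually.of_forall fun k => hy2 (φ k))
      exact has (hax ▸ hx)
    · intro h
      rw [isOpen_iff_mem_nhds]
      intro x hx
      obtain ⟨ε, hε, hball⟩ := h x hx
      have ho : IsOpen {y : T | d' x y < ε} := isOpen_lt (hcx x) continuous_const
      have hmem : x ∈ {y : T | d' x y < ε} := by
        simp only [Set.mem_setOf_eq, (hd'.1 x x).2 rfl]; exact hε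
      exact Filter.mem_of_superset (ho.mem_nhds hmem) fun y hy => hball y hy
  · -- properness
    intro x r
    have hsub : {y : T | d' x y ≤ r} ⊆ {y : T | d x y ≤ r + 1} := by
      intro y hy
      have := abs_lt.1 (hb x y)
      simp only [Set.mem_setOf_eq] at *
      linarith [this.2]
    have hclosed : IsClosed {y : T | d' x y ≤ r} := isClosed_le (hcx x) continuous_const
    exact (hd.2.2 x (r + 1)).of_isClosed_subset hclosed hsub

theorem stmt3 {T : Type*} [TopologicalSpace T] [LocallyCompactSpace T]
    [TopologicalSpace.SeparableSpace T] [TopologicalSpace.MetrizableSpace T]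
    (d : T → T → ℝ) (hd : ProperCompatMetric T d)
    (d' : T → T → ℝ) (hd' : IsMetric d')
    (hcont : Continuous fun p : T × T => d' p.1 p.2)
    (hlt : rhoT T d d' < 1) :
    ProperCompatMetric T d' ∧
      ∀ e e' : T → T → ℝ, ProperCompatMetric T e → IsMetric e' →
        Continuous (fun p : T × T => e' p.1 p.2) → ¬ ProperCompatMetric T e' →
        1 ≤ rhoT T e e' := by
  constructor
  · exact key d hd d' hd' hcont hlt
  · intro e e' he he' hc hne
    by_contra h
    push_neg at h
    exact hne (key e he e' he' hc h)
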